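/- Let γ > 0, T* > 0 and λ̄ > 0, let λ : [0,∞) → ℝ be measurable with 0 < λ(x) ≤ λ̄ for all x ≥ 0, let J′ : [0,∞) → ℝ be nondecreasing and satisfy limsup_{z→∞} ( ln z − λ̄ T* J′(z) ) = +∞, let b : [0,T*] × [0,∞) → (0,∞) be measurable and bounded, and let r₀ ∈ L^{2,γ} be nonnegative. Then there exists a constant c₁ > 0 with the following property: for every jointly measurable h : [0,T*] × [0,∞) → [0,∞) satisfying ∫₀^∞ h(t,x)² e^{γx} dx ≤ c₁² for all t ∈ [0,T*], the function (𝒦h)(t,x) := r₀(t+x) · b(t,x) · exp( ∫₀ᵗ J′( ∫₀^{t−s+x} λ(v) h(s,v) dv ) λ(t−s+x) ds ) satisfies ∫₀^∞ (𝒦h)(t,x)² e^{γx} dx ≤ c₁² for all t ∈ [0,T*]. -/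

import Mathlib

open MeasureTheory

lemma shift_lintegral (F : ℝ → ENNReal) (t : ℝ) :
    ∫⁻ x in Set.Ioi (0:ℝ), F (t + x) = ∫⁻ y in Set.Ioi t, F y := by
  have h := (measurePreserving_add_left (volume : Measure ℝ) t).setLIntegral_comp_preimage_emb
    (measurableEmbedding_addLeft t) F (Set.Ioi t)
  have hpre : (fun x => t + x) ⁻¹' Set.Ioi t = Set.Ioi (0:ℝ) := by
    ext x; simp
  rw [← hpre]; exact h

lemma exp_decay_lintegral {γ : ℝ} (hγ : 0 < γ) :
    ∫⁻ v in Set.Ioi (0:ℝ), ENNReal.ofReal (Real.exp (-(γ * v))) = ENNReal.ofReal (1/γ) := by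
  rw [← MeasureTheory.ofReal_integral_eq_lintegral_ofReal]
  · congr 1
    have := integral_comp_mul_left_Ioi (fun u => Real.exp (-u)) 0 hγ
    simp only [mul_zero] at this
    rw [this, integral_exp_neg_Ioi]
    simp [one_div]
  · exact (exp_neg_integrableOn_Ioi 0 hγ).congr_fun (fun x hx => by ring_nf)
      measurableSet_Ioi
  · exact Filter.Eventually.of_forall fun x => (Real.exp_pos _).le

lemma ofReal_rpow_two_le (x : ℝ) : ENNReal.ofReal x ^ (2:ℝ) ≤ ENNReal.ofReal (x ^ 2) := by
  rw [ENNReal.rpow_two]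
  calc ENNReal.ofReal x ^ (2:ℕ) ≤ ENNReal.ofReal |x| ^ (2:ℕ) := by
        gcongr; exact le_abs_self _
    _ = ENNReal.ofReal (|x| ^ 2) := (ENNReal.ofReal_pow (abs_nonneg _) 2).symm
    _ = ENNReal.ofReal (x ^ 2) := by rw [sq_abs]

lemma aux_CS {γ : ℝ} (hγ : 0 < γ) {f : ℝ → ℝ} (hf : Measurable f) :
    ∫⁻ v in Set.Ioi (0:ℝ), ENNReal.ofReal (f v) ≤
      (∫⁻ v in Set.Ioi (0:ℝ), ENNReal.ofReal (f v ^ 2 * Real.exp (γ * v))) ^ (1/2:ℝ)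
        * ENNReal.ofReal (1 / Real.sqrt γ) := by
  set F : ℝ → ENNReal := fun v => ENNReal.ofReal (f v * Real.exp (γ * v / 2)) with hF
  set G : ℝ → ENNReal := fun v => ENNReal.ofReal (Real.exp (-(γ * v / 2))) with hG
  have hFG : ∀ v, ENNReal.ofReal (f v) = (F * G) v := by
    intro v
    have : f v = f v * Real.exp (γ * v / 2) * Real.exp (-(γ * v / 2)) := by
      rw [mul_assoc, ← Real.exp_add]; simp
    rw [Pi.mul_apply, hF, hG]
    conv_lhs => rw [this]
    exact ENNReal.ofReal_mul' (Real.exp_pos _).le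
  calc ∫⁻ v in Set.Ioi (0:ℝ), ENNReal.ofReal (f v)
      = ∫⁻ v in Set.Ioi (0:ℝ), (F * G) v := by simp_rw [hFG]
    _ ≤ (∫⁻ v in Set.Ioi (0:ℝ), F v ^ (2:ℝ)) ^ (1/2:ℝ) *
        (∫⁻ v in Set.Ioi (0:ℝ), G v ^ (2:ℝ)) ^ (1/2:ℝ) := by
        exact ENNReal.lintegral_mul_le_Lp_mul_Lq _
          (Real.holderConjugate_iff.mpr ⟨one_lt_two, by norm_num⟩)
          ((hf.mul (Real.measurable_exp.comp
            ((measurable_id.const_mul γ).div_const 2))).ennreal_ofReal).aemeasurable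
          ((Real.measurable_exp.comp
            (((measurable_id.const_mul γ).div_const 2).neg)).ennreal_ofReal).aemeasurable
    _ ≤ (∫⁻ v in Set.Ioi (0:ℝ), ENNReal.ofReal (f v ^ 2 * Real.exp (γ * v))) ^ (1/2:ℝ)
        * ENNReal.ofReal (1 / Real.sqrt γ) := by
        gcongr with v
        · calc F v ^ (2:ℝ) ≤ ENNReal.ofReal ((f v * Real.exp (γ * v / 2)) ^ 2) :=
              ofReal_rpow_two_le _
            _ = ENNReal.ofReal (f v ^ 2 * Real.exp (γ * v)) := by
              congr 1
              rw [mul_pow, pow_two (Real.exp _), ← Real.exp_add, add_halves]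
        · have hGv : ∀ v : ℝ, G v ^ (2:ℝ) = ENNReal.ofReal (Real.exp (-(γ * v))) := by
            intro v
            rw [hG]
            simp only [ENNReal.rpow_two]
            rw [← ENNReal.ofReal_pow (Real.exp_pos _).le, pow_two, ← Real.exp_add]
            congr 1
            ring
          simp_rw [hGv]
          rw [exp_decay_lintegral hγ, ENNReal.ofReal_rpow_of_pos (by positivity)]
          apply le_of_eq
          congr 1
          rw [← Real.sqrt_eq_rpow, one_div, Real.sqrt_inv, one_div]

lemma exists_z {lb T : ℝ} {J' : ℝ → ℝ}
    (hJlimsup : Filter.limsup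
      (fun z : ℝ => ((Real.log z - lb * T * J' z : ℝ) : EReal)) Filter.atTop = ⊤)
    (M : ℝ) : ∃ z : ℝ, Real.exp M ≤ z ∧ M ≤ Real.log z - lb * T * J' z := by
  by_contra hc
  push_neg at hc
  have hev : ∀ᶠ z in Filter.atTop,
      ((Real.log z - lb * T * J' z : ℝ) : EReal) ≤ ((M : ℝ) : EReal) := by
    filter_upwards [Filter.eventually_ge_atTop (Real.exp M)] with z hz
    exact_mod_cast (hc z hz).le
  have hle := Filter.limsup_le_of_le (by isBoundedDefault) hev
  rw [hJlimsup] at hle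
  exact absurd (top_le_iff.mp hle) (by simp)
/-- Invariance of a ball of radius `c₁` in `L^{2,γ}_+` under the operator
`(𝒦h)(t,x) = r₀(t+x) b(t,x) exp(∫₀ᵗ J′(∫₀^{t−s+x} λ(v) h(s,v) dv) λ(t−s+x) ds)`,
provided `J′` is nondecreasing and `limsup_{z→∞} (ln z − λ̄ T* J′(z)) = +∞`. -/
theorem invariant_ball_for_K (γ T lb : ℝ) (hγ : 0 < γ) (hT : 0 < T) (hlb : 0 < lb)
    (lam : ℝ → ℝ) (hlam_meas : Measurable lam)
    (hlam : ∀ x : ℝ, 0 ≤ x → 0 < lam x ∧ lam x ≤ lb)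
    (J' : ℝ → ℝ) (hJmono : ∀ ⦃y z : ℝ⦄, 0 ≤ y → y ≤ z → J' y ≤ J' z)
    (hJlimsup : Filter.limsup
      (fun z : ℝ => ((Real.log z - lb * T * J' z : ℝ) : EReal)) Filter.atTop = ⊤)
    (b : ℝ → ℝ → ℝ) (hbmeas : Measurable (Function.uncurry b))
    (hb : ∃ B : ℝ, ∀ t ∈ Set.Icc 0 T, ∀ x ∈ Set.Ici (0 : ℝ), 0 < b t x ∧ b t x ≤ B)
    (r₀ : ℝ → ℝ) (hr₀meas : Measurable r₀) (hr₀nn : ∀ x, 0 ≤ r₀ x)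
    (hr₀L2 : ∫⁻ x in Set.Ioi (0 : ℝ), ENNReal.ofReal (r₀ x ^ 2 * Real.exp (γ * x)) < ⊤) :
    ∃ c₁ : ℝ, 0 < c₁ ∧
      ∀ h : ℝ → ℝ → ℝ, Measurable (Function.uncurry h) → (∀ t x, 0 ≤ h t x) →
        (∀ t ∈ Set.Icc 0 T,
          ∫⁻ x in Set.Ioi (0 : ℝ), ENNReal.ofReal (h t x ^ 2 * Real.exp (γ * x))
            ≤ ENNReal.ofReal (c₁ ^ 2)) →
        ∀ t ∈ Set.Icc 0 T,
          ∫⁻ x in Set.Ioi (0 : ℝ), ENNReal.ofReal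
            ((r₀ (t + x) * b t x * Real.exp (∫ s in (0 : ℝ)..t,
                J' (∫ v in (0 : ℝ)..(t - s + x), lam v * h s v) * lam (t - s + x))) ^ 2
              * Real.exp (γ * x)) ≤ ENNReal.ofReal (c₁ ^ 2) := by
  obtain ⟨B, hB⟩ := hb
  set B' := max B 1 with hB'def
  have hB'1 : (1:ℝ) ≤ B' := le_max_right _ _
  have hB'pos : (0:ℝ) < B' := lt_of_lt_of_le one_pos hB'1
  set R := (∫⁻ x in Set.Ioi (0:ℝ), ENNReal.ofReal (r₀ x ^ 2 * Real.exp (γ * x))).toReal with hRdef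
  have hRnn : 0 ≤ R := ENNReal.toReal_nonneg
  have hRofReal : ∫⁻ x in Set.Ioi (0:ℝ), ENNReal.ofReal (r₀ x ^ 2 * Real.exp (γ * x))
      = ENNReal.ofReal R := (ENNReal.ofReal_toReal hr₀L2.ne).symm
  have hsγ : 0 < Real.sqrt γ := Real.sqrt_pos.mpr hγ
  set C0 := B' * Real.sqrt (R + 1) * lb / Real.sqrt γ with hC0def
  have hsR : 0 < Real.sqrt (R + 1) := Real.sqrt_pos.mpr (by linarith)
  have hC0pos : 0 < C0 := by positivity
  obtain ⟨z, hz1, hz2⟩ := exists_z hJlimsup (Real.log C0)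
  have hzpos : 0 < z := lt_of_lt_of_le (Real.exp_pos _) hz1
  have hlogz : Real.log C0 ≤ Real.log z := by
    calc Real.log C0 = Real.log (Real.exp (Real.log C0)) := (Real.log_exp _).symm
      _ ≤ Real.log z := Real.log_le_log (Real.exp_pos _) hz1
  set K := lb * max (J' z) 0 with hKdef
  have hKnn : 0 ≤ K := mul_nonneg hlb.le (le_max_right _ _)
  set c₁ := z * Real.sqrt γ / lb with hc₁def
  have hc₁pos : 0 < c₁ := by positivity
  have hkey : C0 * Real.exp (K * T) ≤ z := by
    have h1 : Real.log C0 + K * T ≤ Real.log z := by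
      rcases le_or_gt (J' z) 0 with hJ | hJ
      · have hK0 : K = 0 := by rw [hKdef, max_eq_right hJ, mul_zero]
        rw [hK0, zero_mul, add_zero]; exact hlogz
      · have hKeq : K = lb * J' z := by rw [hKdef, max_eq_left hJ.le]
        have he : K * T = lb * T * J' z := by rw [hKeq]; ring
        rw [he]; linarith
    have hce : C0 * Real.exp (K * T) = Real.exp (Real.log C0 + K * T) := by
      rw [Real.exp_add, Real.exp_log hC0pos]
    calc C0 * Real.exp (K * T) = Real.exp (Real.log C0 + K * T) := hce
      _ ≤ Real.exp (Real.log z) := Real.exp_le_exp.mpr h1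
      _ = z := Real.exp_log hzpos
  have hkey2 : B' * Real.sqrt (R + 1) * Real.exp (K * T) ≤ c₁ := by
    rw [hc₁def, le_div_iff₀ hlb]
    calc B' * Real.sqrt (R + 1) * Real.exp (K * T) * lb
        = (C0 * Real.exp (K * T)) * Real.sqrt γ := by
          rw [hC0def]; field_simp
      _ ≤ z * Real.sqrt γ := mul_le_mul_of_nonneg_right hkey hsγ.le
  refine ⟨c₁, hc₁pos, ?_⟩
  intro h hhmeas hhnn hhnorm t ht
  obtain ⟨ht0, htT⟩ := ht
  have hzc : ENNReal.ofReal lb * (ENNReal.ofReal (c₁ ^ 2) ^ (1/2:ℝ)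
      * ENNReal.ofReal (1 / Real.sqrt γ)) = ENNReal.ofReal z := by
    rw [ENNReal.ofReal_rpow_of_pos (by positivity)]
    have h2 : (c₁ ^ 2 : ℝ) ^ (1/2:ℝ) = c₁ := by
      rw [← Real.rpow_two, ← Real.rpow_mul hc₁pos.le]
      norm_num
    rw [h2, ← ENNReal.ofReal_mul hc₁pos.le, ← ENNReal.ofReal_mul hlb.le]
    congr 1
    rw [hc₁def]
    field_simp
  -- inner integral bound
  have hinner : ∀ s ∈ Set.Icc (0:ℝ) t, ∀ w : ℝ, 0 ≤ w →
      0 ≤ (∫ v in (0:ℝ)..w, lam v * h s v) ∧ (∫ v in (0:ℝ)..w, lam v * h s v) ≤ z := by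
    intro s hs w hw
    constructor
    · exact intervalIntegral.integral_nonneg hw
        (fun u hu => mul_nonneg (hlam u hu.1).1.le (hhnn s u))
    · have hmw : Measurable fun v => lam v * h s v := hlam_meas.mul hhmeas.of_uncurry_left
      rw [intervalIntegral.integral_of_le hw]
      have hae : 0 ≤ᵐ[volume.restrict (Set.Ioc 0 w)] fun v => lam v * h s v := by
        filter_upwards [ae_restrict_mem measurableSet_Ioc] with v hv
        exact mul_nonneg (hlam v hv.1.le).1.le (hhnn s v)
      rw [MeasureTheory.integral_eq_lintegral_of_nonneg_ae hae
        hmw.aestronglyMeasurable.restrict]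
      apply ENNReal.toReal_le_of_le_ofReal hzpos.le
      calc ∫⁻ v in Set.Ioc 0 w, ENNReal.ofReal (lam v * h s v)
          ≤ ∫⁻ v in Set.Ioc 0 w, ENNReal.ofReal lb * ENNReal.ofReal (h s v) := by
            apply setLIntegral_mono' measurableSet_Ioc
            intro v hv
            rw [← ENNReal.ofReal_mul hlb.le]
            exact ENNReal.ofReal_le_ofReal
              (mul_le_mul_of_nonneg_right (hlam v hv.1.le).2 (hhnn s v))
        _ ≤ ENNReal.ofReal lb * ∫⁻ v in Set.Ioi (0:ℝ), ENNReal.ofReal (h s v) := by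
            rw [lintegral_const_mul' _ _ ENNReal.ofReal_ne_top]
            exact mul_le_mul_right (lintegral_mono_set Set.Ioc_subset_Ioi_self) _
        _ ≤ ENNReal.ofReal lb *
            ((∫⁻ v in Set.Ioi (0:ℝ), ENNReal.ofReal (h s v ^ 2 * Real.exp (γ * v))) ^ (1/2:ℝ)
              * ENNReal.ofReal (1 / Real.sqrt γ)) :=
            mul_le_mul_right (aux_CS hγ hhmeas.of_uncurry_left) _
        _ ≤ ENNReal.ofReal lb * (ENNReal.ofReal (c₁ ^ 2) ^ (1/2:ℝ)
              * ENNReal.ofReal (1 / Real.sqrt γ)) := by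
            gcongr
            exact hhnorm s ⟨hs.1, hs.2.trans htT⟩
        _ = ENNReal.ofReal z := hzc
  -- exponent bound
  have hEbound : ∀ x : ℝ, x ∈ Set.Ioi (0:ℝ) →
      (∫ s in (0:ℝ)..t, J' (∫ v in (0:ℝ)..(t - s + x), lam v * h s v) * lam (t - s + x))
        ≤ K * T := by
    intro x hx
    have hgle : ∀ s ∈ Set.Icc (0:ℝ) t,
        J' (∫ v in (0:ℝ)..(t - s + x), lam v * h s v) * lam (t - s + x) ≤ K := by
      intro s hs
      have hwnn : 0 ≤ t - s + x := by
        have := hs.2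
        have := le_of_lt (Set.mem_Ioi.mp hx)
        linarith
      have hlam' := hlam (t - s + x) hwnn
      obtain ⟨hInn, hIle⟩ := hinner s hs (t - s + x) hwnn
      have hJle : J' (∫ v in (0:ℝ)..(t - s + x), lam v * h s v) ≤ J' z := hJmono hInn hIle
      rcases le_or_gt (J' (∫ v in (0:ℝ)..(t - s + x), lam v * h s v)) 0 with hJ | hJ
      · exact le_trans (mul_nonpos_of_nonpos_of_nonneg hJ hlam'.1.le) hKnn
      · have hJznn : 0 ≤ J' z := le_trans hJ.le hJle
        calc J' (∫ v in (0:ℝ)..(t - s + x), lam v * h s v) * lam (t - s + x)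
            ≤ J' z * lb := mul_le_mul hJle hlam'.2 hlam'.1.le hJznn
          _ ≤ max (J' z) 0 * lb := mul_le_mul_of_nonneg_right (le_max_left _ _) hlb.le
          _ = K := by rw [hKdef]; ring
    by_cases hig : IntervalIntegrable
        (fun s => J' (∫ v in (0:ℝ)..(t - s + x), lam v * h s v) * lam (t - s + x)) volume 0 t
    · calc (∫ s in (0:ℝ)..t, J' (∫ v in (0:ℝ)..(t - s + x), lam v * h s v) * lam (t - s + x))
          ≤ ∫ _ in (0:ℝ)..t, K :=
            intervalIntegral.integral_mono_on ht0 hig intervalIntegrable_const hgle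
        _ = K * t := by rw [intervalIntegral.integral_const, smul_eq_mul, sub_zero, mul_comm]
        _ ≤ K * T := mul_le_mul_of_nonneg_left htT hKnn
    · rw [intervalIntegral.integral_undef hig]
      positivity
  -- final estimate
  calc ∫⁻ x in Set.Ioi (0 : ℝ), ENNReal.ofReal
        ((r₀ (t + x) * b t x * Real.exp (∫ s in (0 : ℝ)..t,
            J' (∫ v in (0 : ℝ)..(t - s + x), lam v * h s v) * lam (t - s + x))) ^ 2
          * Real.exp (γ * x))
      ≤ ∫⁻ x in Set.Ioi (0:ℝ), ENNReal.ofReal (B' ^ 2 * Real.exp (K * T) ^ 2)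
          * ENNReal.ofReal (r₀ (t + x) ^ 2 * Real.exp (γ * (t + x))) := by
        apply setLIntegral_mono' measurableSet_Ioi
        intro x hx
        rw [← ENNReal.ofReal_mul (by positivity)]
        apply ENNReal.ofReal_le_ofReal
        have hbt := hB t ⟨ht0, htT⟩ x (le_of_lt (Set.mem_Ioi.mp hx))
        have hbB' : b t x ≤ B' := le_trans hbt.2 (le_max_left _ _)
        have hE : Real.exp (∫ s in (0 : ℝ)..t,
            J' (∫ v in (0 : ℝ)..(t - s + x), lam v * h s v) * lam (t - s + x))
            ≤ Real.exp (K * T) := Real.exp_le_exp.mpr (hEbound x hx)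
        have hexp : Real.exp (γ * x) ≤ Real.exp (γ * (t + x)) := by
          apply Real.exp_le_exp.mpr
          nlinarith
        calc (r₀ (t + x) * b t x * Real.exp (∫ s in (0 : ℝ)..t,
              J' (∫ v in (0 : ℝ)..(t - s + x), lam v * h s v) * lam (t - s + x))) ^ 2
              * Real.exp (γ * x)
            ≤ (r₀ (t + x) * B' * Real.exp (K * T)) ^ 2 * Real.exp (γ * (t + x)) := by
              apply mul_le_mul _ hexp (Real.exp_pos _).le (by positivity)
              apply pow_le_pow_left₀
                (mul_nonneg (mul_nonneg (hr₀nn _) hbt.1.le) (Real.exp_pos _).le)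
              exact mul_le_mul (mul_le_mul le_rfl hbB' hbt.1.le (hr₀nn _)) hE
                (Real.exp_pos _).le (mul_nonneg (hr₀nn _) hB'pos.le)
          _ = B' ^ 2 * Real.exp (K * T) ^ 2 * (r₀ (t + x) ^ 2 * Real.exp (γ * (t + x))) := by
              ring
    _ = ENNReal.ofReal (B' ^ 2 * Real.exp (K * T) ^ 2)
        * ∫⁻ x in Set.Ioi (0:ℝ), ENNReal.ofReal (r₀ (t + x) ^ 2 * Real.exp (γ * (t + x))) :=
        lintegral_const_mul' _ _ ENNReal.ofReal_ne_top
    _ = ENNReal.ofReal (B' ^ 2 * Real.exp (K * T) ^ 2)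
        * ∫⁻ y in Set.Ioi t, ENNReal.ofReal (r₀ y ^ 2 * Real.exp (γ * y)) := by
        rw [shift_lintegral (fun y => ENNReal.ofReal (r₀ y ^ 2 * Real.exp (γ * y))) t]
    _ ≤ ENNReal.ofReal (B' ^ 2 * Real.exp (K * T) ^ 2)
        * ∫⁻ y in Set.Ioi (0:ℝ), ENNReal.ofReal (r₀ y ^ 2 * Real.exp (γ * y)) :=
        mul_le_mul_right (lintegral_mono_set (Set.Ioi_subset_Ioi ht0)) _
    _ = ENNReal.ofReal (B' ^ 2 * Real.exp (K * T) ^ 2) * ENNReal.ofReal R := by rw [hRofReal]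
    _ ≤ ENNReal.ofReal (c₁ ^ 2) := by
        rw [← ENNReal.ofReal_mul (by positivity)]
        apply ENNReal.ofReal_le_ofReal
        have hsq : (B' * Real.sqrt (R + 1) * Real.exp (K * T)) ^ 2
            = B' ^ 2 * Real.exp (K * T) ^ 2 * (R + 1) := by
          rw [mul_pow, mul_pow, Real.sq_sqrt (by linarith)]
          ring
        have h2 : (B' * Real.sqrt (R + 1) * Real.exp (K * T)) ^ 2 ≤ c₁ ^ 2 :=
          pow_le_pow_left₀ (by positivity) hkey2 2
        nlinarith [Real.exp_pos (K * T), sq_nonneg B']
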